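/- Let a be a graded strongly π-regular homogeneous element of a G-graded ring R with decomposition a = f + u (f homogeneous idempotent, u homogeneous unit, fa = af, faf nilpotent). Then a is graded strongly nil clean if and only if 2f − 1 + u is nilpotent and u ∈ R_e. -/

import Mathlib

theorem pow_mul_pow_one {M : Type*} [Monoid M] {v u : M} (h : v * u = 1) :
    ∀ k : ℕ, v ^ k * u ^ k = 1
  | 0 => by simp
  | k + 1 => by
    rw [pow_succ, pow_succ', mul_assoc, ← mul_assoc v u, h, one_mul]
    exact pow_mul_pow_one h k



/-- A `G`-grading of a ring `R`: a family of additive subgroups `C g` with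
`C g * C h ⊆ C (g*h)`, `1 ∈ C e`, and `R = ⊕_g C g` (internal direct sum). -/
structure Grading (G : Type*) [Group G] [DecidableEq G] (R : Type*) [Ring R] where
  C : G → AddSubgroup R
  one_mem : (1 : R) ∈ C 1
  mul_mem : ∀ {g h : G} {a b : R}, a ∈ C g → b ∈ C h → a * b ∈ C (g * h)
  isInternal : DirectSum.IsInternal C

namespace Grading

variable {G : Type*} [Group G] [DecidableEq G] {R : Type*} [Ring R]

/-- An element is homogeneous if it lies in some component. -/
def Homogeneous (A : Grading G R) (a : R) : Prop := ∃ g, a ∈ A.C g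

/-- A homogeneous element is graded nil clean if it is the sum of a homogeneous
idempotent and a homogeneous nilpotent. -/
def IsGradedNilClean (A : Grading G R) (a : R) : Prop :=
  ∃ f b : R, A.Homogeneous f ∧ IsIdempotentElem f ∧ A.Homogeneous b ∧
    IsNilpotent b ∧ a = f + b

/-- A graded ring is graded nil clean if every homogeneous element is. -/
def GradedNilClean (A : Grading G R) : Prop :=
  ∀ a : R, A.Homogeneous a → A.IsGradedNilClean a

/-- Graded strongly nil clean element: the idempotent and nilpotent commute. -/
def IsGradedStronglyNilClean (A : Grading G R) (a : R) : Prop :=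
  ∃ f b : R, A.Homogeneous f ∧ IsIdempotentElem f ∧ A.Homogeneous b ∧
    IsNilpotent b ∧ f * b = b * f ∧ a = f + b

def GradedStronglyNilClean (A : Grading G R) : Prop :=
  ∀ a : R, A.Homogeneous a → A.IsGradedStronglyNilClean a

lemma eq_zero_of_mem_ne (A : Grading G R) {g h : G} (hne : g ≠ h) {x : R}
    (hg : x ∈ A.C g) (hh : x ∈ A.C h) : x = 0 := by
  have hinj := A.isInternal.injective
  have h1 : DirectSum.coeAddMonoidHom A.C (DirectSum.of (fun i => A.C i) g ⟨x, hg⟩) =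
      DirectSum.coeAddMonoidHom A.C (DirectSum.of (fun i => A.C i) h ⟨x, hh⟩) := by
    simp [DirectSum.coeAddMonoidHom_of]
  have h2 := congrArg (fun d => ((d g : A.C g) : R)) (hinj h1)
  simpa [DirectSum.of_eq_same, DirectSum.of_eq_of_ne _ _ _ hne] using h2

lemma idem_mem_one (A : Grading G R) {f : R} (hf : ∃ g, f ∈ A.C g)
    (hfi : IsIdempotentElem f) : f ∈ A.C 1 := by
  obtain ⟨g, hg⟩ := hf
  by_cases h : g = 1
  · exact h ▸ hg
  · have hgg : f ∈ A.C (g * g) := by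
      have := A.mul_mem hg hg
      rwa [hfi.eq] at this
    have hne : g ≠ g * g := by
      intro h'
      exact h (mul_left_cancel (a := g) (by rw [mul_one, ← h']))
    have : f = 0 := A.eq_zero_of_mem_ne hne hg hgg
    rw [this]; exact (A.C 1).zero_mem

lemma unit_mem_one (A : Grading G R) {u x y : R} {g h : G}
    (hx : x ∈ A.C 1) (hy : y ∈ A.C g) (hu : u ∈ A.C h)
    (heq : u = x + y) (hyn : IsNilpotent y) (huu : IsUnit u) : u ∈ A.C 1 := by
  by_cases hg : g = 1
  · rw [heq]; exact (A.C 1).add_mem hx (hg ▸ hy)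
  by_cases hh : h = 1
  · exact hh ▸ hu
  have hx0 : x = 0 := by
    have hinj := A.isInternal.injective
    have h1 : DirectSum.coeAddMonoidHom A.C (DirectSum.of (fun i => A.C i) h ⟨u, hu⟩) =
        DirectSum.coeAddMonoidHom A.C
          (DirectSum.of (fun i => A.C i) 1 ⟨x, hx⟩ + DirectSum.of (fun i => A.C i) g ⟨y, hy⟩) := by
      simp [DirectSum.coeAddMonoidHom_of, heq]
    have h2 := congrArg (fun d => ((d 1 : A.C 1) : R)) (hinj h1).symm
    simpa [DirectSum.add_apply, DirectSum.of_eq_same,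
      DirectSum.of_eq_of_ne _ _ _ (Ne.symm hh), DirectSum.of_eq_of_ne _ _ _ (Ne.symm hg)] using h2
  have huy : u = y := by rw [heq, hx0, zero_add]
  obtain ⟨k, hk⟩ := hyn
  have hvu : (↑huu.unit⁻¹ : R) * u = 1 := huu.val_inv_mul
  have huk : u ^ k = 0 := by rw [huy, hk]
  have h10 : (1 : R) = 0 := by
    calc (1 : R) = (↑huu.unit⁻¹ : R) ^ k * u ^ k := (pow_mul_pow_one hvu k).symm
    _ = 0 := by rw [huk, mul_zero]
  have hu0 : u = 0 := by
    calc u = u * 1 := (mul_one u).symm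
    _ = u * 0 := by rw [h10]
    _ = 0 := mul_zero u
  rw [hu0]; exact (A.C 1).zero_mem

end Grading

/-- Let `a = f + u` be a graded strongly π-regular decomposition of a homogeneous
element `a` (so `f` is a homogeneous idempotent, `u` a homogeneous unit,
`fa = af` and `faf` is nilpotent).  Then `a` is graded strongly nil clean iff
`2f - 1 + u` is nilpotent and `u ∈ R_e`. -/
theorem stmt8 {G : Type*} [Group G] [DecidableEq G] {R : Type*} [Ring R]
    (A : Grading G R) (a f u : R) (ha : A.Homogeneous a)
    (hf : A.Homogeneous f) (hfi : IsIdempotentElem f)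
    (hu : A.Homogeneous u) (huu : IsUnit u)
    (hdec : a = f + u) (hc : f * a = a * f) (hn : IsNilpotent (f * a * f)) :
    A.IsGradedStronglyNilClean a ↔
      (IsNilpotent (2 * f - 1 + u) ∧ u ∈ A.C 1) := by

  obtain ⟨n, hfn⟩ := hn
  have hfu : f * u = u * f := by
    have h := hc
    rw [hdec] at h
    linear_combination (norm := noncomm_ring) h
  have hau : a * u = u * a := by
    rw [hdec]; linear_combination (norm := noncomm_ring) hfu
  have hcomm : (1 - f) * (2 * f - 1 + u) = (2 * f - 1 + u) * (1 - f) := by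
    linear_combination (norm := noncomm_ring) -hfu
  constructor
  · rintro ⟨E, b, hEhom, hEi, hbhom, ⟨m, hbm⟩, hEb, hab⟩
    have hba : b * a = a * b := by
      rw [hab]; linear_combination (norm := noncomm_ring) -hEb
    have hEa : E * a = a * E := by
      rw [hab]; linear_combination (norm := noncomm_ring) hEb
    have haf : f * a * f = f * a := by
      rw [hc, mul_assoc, hfi.eq, ← hc]
    have hfak : ∀ k : ℕ, f * a ^ k = a ^ k * f := fun k =>
      (Commute.pow_right (hc : Commute f a) k)
    have hfa_pow : ∀ k : ℕ, (f * a) ^ (k + 1) = f * a ^ (k + 1) := by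
      intro k
      induction k with
      | zero => simp
      | succ k ih =>
        calc (f * a) ^ (k + 2) = (f * a) ^ (k + 1) * (f * a) := pow_succ _ _
        _ = f * a ^ (k + 1) * (f * a) := by rw [ih]
        _ = f * (a ^ (k + 1) * f) * a := by noncomm_ring
        _ = f * (f * a ^ (k + 1)) * a := by rw [hfak]
        _ = (f * f) * (a ^ (k + 1) * a) := by noncomm_ring
        _ = f * a ^ (k + 2) := by rw [hfi.eq, ← pow_succ]
    have hfan : f * a ^ (n + 1) = 0 := by
      have h1 : (f * a * f) ^ (n + 1) = 0 := by rw [pow_succ, hfn, zero_mul]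
      rw [haf, hfa_pow] at h1
      exact h1
    have hFa_pow : ∀ k : ℕ, a ^ (k + 1) * (1 - E) = b ^ (k + 1) * (1 - E) := by
      intro k
      have hbase : a * (1 - E) = b * (1 - E) := by
        rw [hab]; linear_combination (norm := noncomm_ring) -hEi.eq
      induction k with
      | zero => simpa using hbase
      | succ k ih =>
        have hbaC : Commute b a := hba
        have hbak : a ^ (k + 1) * b = b * a ^ (k + 1) := hbaC.symm.pow_left (k + 1)
        calc a ^ (k + 2) * (1 - E) = a ^ (k + 1) * (a * (1 - E)) := by
              rw [← mul_assoc, ← pow_succ]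
        _ = a ^ (k + 1) * (b * (1 - E)) := by rw [hbase]
        _ = (a ^ (k + 1) * b) * (1 - E) := by rw [mul_assoc]
        _ = (b * a ^ (k + 1)) * (1 - E) := by rw [hbak]
        _ = b * (a ^ (k + 1) * (1 - E)) := by rw [mul_assoc]
        _ = b * (b ^ (k + 1) * (1 - E)) := by rw [ih]
        _ = b ^ (k + 2) * (1 - E) := by rw [← mul_assoc, ← pow_succ']
    have hFan : a ^ (m + 1) * (1 - E) = 0 := by
      rw [hFa_pow, pow_succ, hbm, zero_mul, zero_mul]
    set N : ℕ := (n + 1) + (m + 1) with hN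
    have hfN : f * a ^ N = 0 := by
      rw [hN, pow_add, ← mul_assoc, hfan, zero_mul]
    have haNf : a ^ N * f = 0 := by rw [← hfak, hfN]
    have haNE : a ^ N * (1 - E) = 0 := by
      rw [hN, pow_add, mul_assoc, hFan, mul_zero]
    have hae : a * (1 - f) = u * (1 - f) := by
      rw [hdec]; linear_combination (norm := noncomm_ring) -hfi.eq
    have hane : ∀ k : ℕ, a ^ k * (1 - f) = u ^ k * (1 - f) := by
      intro k
      induction k with
      | zero => simp
      | succ k ih =>
        have hauC : Commute a u := hau
        have hku : a ^ k * u = u * a ^ k := hauC.pow_left k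
        calc a ^ (k + 1) * (1 - f) = a ^ k * (a * (1 - f)) := by rw [← mul_assoc, ← pow_succ]
        _ = a ^ k * (u * (1 - f)) := by rw [hae]
        _ = (a ^ k * u) * (1 - f) := by rw [mul_assoc]
        _ = u * (a ^ k * (1 - f)) := by rw [hku, mul_assoc]
        _ = u * (u ^ k * (1 - f)) := by rw [ih]
        _ = u ^ (k + 1) * (1 - f) := by rw [← mul_assoc, ← pow_succ']
    have haNe : a ^ N = u ^ N * (1 - f) := by
      calc a ^ N = a ^ N * f + a ^ N * (1 - f) := by noncomm_ring
      _ = u ^ N * (1 - f) := by rw [haNf, zero_add, hane]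
    have hwu := huu
    obtain ⟨w, hw⟩ := hwu
    have hvu : (↑w⁻¹ : R) * u = 1 := by rw [← hw]; exact w.inv_mul
    have he_eq : (1 - f) = (↑w⁻¹ : R) ^ N * a ^ N := by
      rw [haNe, ← mul_assoc, pow_mul_pow_one hvu, one_mul]
    have hsunit : IsUnit (2 * E - 1 : R) := by
      have hs : (2 * E - 1 : R) * (2 * E - 1) = 1 := by
        linear_combination (norm := noncomm_ring) 4 * hEi.eq
      exact ⟨⟨2 * E - 1, 2 * E - 1, hs, hs⟩, rfl⟩
    have hsb : Commute b (2 * E - 1 : R) := by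
      show b * (2 * E - 1) = (2 * E - 1) * b
      linear_combination (norm := noncomm_ring) -2 * hEb
    have hUunit : IsUnit (2 * E - 1 + b) :=
      IsNilpotent.isUnit_add_left_of_commute ⟨m, hbm⟩ hsunit hsb
    set U : R := 2 * E - 1 + b with hUdef
    obtain ⟨W, hW⟩ := hUunit
    have hWU : (↑W⁻¹ : R) * U = 1 := by rw [← hW]; exact W.inv_mul
    have hUW : U * (↑W⁻¹ : R) = 1 := by rw [← hW]; exact W.mul_inv
    have haE : a * E = U * E := by
      rw [hab, hUdef]; linear_combination (norm := noncomm_ring) -hEi.eq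
    have haU : a * U = U * a := by
      rw [hUdef, hab]; linear_combination (norm := noncomm_ring) -hEb
    have hEU : E * U = U * E := by
      rw [hUdef]; linear_combination (norm := noncomm_ring) hEb
    have hanU : ∀ k : ℕ, a ^ k * E = U ^ k * E := by
      intro k
      induction k with
      | zero => simp
      | succ k ih =>
        have haUC : Commute a U := haU
        have hkU : a ^ k * U = U * a ^ k := haUC.pow_left k
        calc a ^ (k + 1) * E = a ^ k * (a * E) := by rw [← mul_assoc, ← pow_succ]
        _ = a ^ k * (U * E) := by rw [haE]
        _ = (a ^ k * U) * E := by rw [mul_assoc]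
        _ = U * (a ^ k * E) := by rw [hkU, mul_assoc]
        _ = U * (U ^ k * E) := by rw [ih]
        _ = U ^ (k + 1) * E := by rw [← mul_assoc, ← pow_succ']
    have haNU : a ^ N = U ^ N * E := by
      calc a ^ N = a ^ N * E + a ^ N * (1 - E) := by noncomm_ring
      _ = U ^ N * E := by rw [haNE, add_zero, hanU]
    have hEUC : Commute E U := hEU
    have hEUN : E * U ^ N = U ^ N * E := hEUC.pow_right N
    have hE_right : E = a ^ N * (↑W⁻¹ : R) ^ N := by
      calc E = E * (U ^ N * (↑W⁻¹ : R) ^ N) := by rw [pow_mul_pow_one hUW, mul_one]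
      _ = (E * U ^ N) * (↑W⁻¹ : R) ^ N := by rw [mul_assoc]
      _ = (U ^ N * E) * (↑W⁻¹ : R) ^ N := by rw [hEUN]
      _ = a ^ N * (↑W⁻¹ : R) ^ N := by rw [← haNU]
    have hfE0 : f * E = 0 := by rw [hE_right, ← mul_assoc, hfN, zero_mul]
    have heE0 : (1 - f) * (1 - E) = 0 := by rw [he_eq, mul_assoc, haNE, mul_zero]
    have heE : (1 - f) = E := by
      have h1 : (1 - f) = (1 - f) * E := by
        linear_combination (norm := noncomm_ring) heE0
      have h2 : E = (1 - f) * E := by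
        linear_combination (norm := noncomm_ring) hfE0
      rw [h1, ← h2]
    have hfE : f = 1 - E := by
      linear_combination (norm := noncomm_ring) -heE
    have huaf : u = a - f := by rw [hdec]; noncomm_ring
    constructor
    · refine ⟨m, ?_⟩
      have hb2 : 2 * f - 1 + u = b := by
        rw [huaf, hab, hfE]; noncomm_ring
      rw [hb2, hbm]
    · have hE1 : E ∈ A.C 1 := A.idem_mem_one hEhom hEi
      obtain ⟨g, hbg⟩ := hbhom
      obtain ⟨h, huh⟩ := hu
      have hueq : u = (2 * E - 1) + b := by
        rw [huaf, hab, hfE]; noncomm_ring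
      have hx1 : (2 * E - 1 : R) ∈ A.C 1 := by
        have h2E : (2 : R) * E ∈ A.C 1 := by
          rw [two_mul]; exact (A.C 1).add_mem hE1 hE1
        exact (A.C 1).sub_mem h2E A.one_mem
      exact A.unit_mem_one hx1 hbg huh hueq ⟨m, hbm⟩ huu
  · rintro ⟨hnil, hu1⟩
    have hf1 : f ∈ A.C 1 := A.idem_mem_one hf hfi
    refine ⟨1 - f, 2 * f - 1 + u, ⟨1, (A.C 1).sub_mem A.one_mem hf1⟩, hfi.one_sub,
      ⟨1, ?_⟩, hnil, hcomm, by rw [hdec]; noncomm_ring⟩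
    have h2f : (2 : R) * f ∈ A.C 1 := by
      rw [two_mul]; exact (A.C 1).add_mem hf1 hf1
    exact (A.C 1).add_mem ((A.C 1).sub_mem h2f A.one_mem) hu1
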